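/- Fix real numbers t_1, …, t_n not all equal, and let p(λ)_i = exp(λ t_i)/Σ_j exp(λ t_j). Then the entropy H(p(λ)) is a strictly decreasing function of λ on (0, ∞), and H(p(λ)) → log k as λ → ∞, where k is the number of indices attaining max_i t_i. -/

import Mathlib

open Real

private lemma aux_mul_exp_atBot :
    Filter.Tendsto (fun u : ℝ => u * Real.exp u) Filter.atBot (nhds 0) := by
  have h := (Real.tendsto_pow_mul_exp_neg_atTop_nhds_zero 1).comp
    Filter.tendsto_neg_atBot_atTop
  have h2 := h.neg
  simp only [Function.comp, pow_one, neg_neg, neg_mul, neg_zero] at h2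
  simpa using h2

theorem softmax_entropy_strictAnti_and_limit (n : ℕ) (t : Fin n → ℝ)
    (hne : ∃ i j, t i ≠ t j)
    (M : ℝ) (hM : IsGreatest (Set.range t) M)
    (k : ℕ) (hk : k = (Finset.univ.filter (fun i => t i = M)).card) :
    StrictAntiOn
      (fun l : ℝ =>
        -∑ i, (exp (l * t i) / ∑ j, exp (l * t j)) *
          log (exp (l * t i) / ∑ j, exp (l * t j))) (Set.Ioi (0 : ℝ)) ∧
    Filter.Tendsto
      (fun l : ℝ =>
        -∑ i, (exp (l * t i) / ∑ j, exp (l * t j)) *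
          log (exp (l * t i) / ∑ j, exp (l * t j)))
      Filter.atTop (nhds (log k)) := by
  obtain ⟨i0, j0, hij0⟩ := hne
  have hn : Nonempty (Fin n) := ⟨i0⟩
  set s : Fin n → ℝ := fun i => t i - M with hs
  have hsij : s i0 ≠ s j0 := by
    simp only [hs]; intro h; exact hij0 (by linarith [sub_left_injective.eq_iff.mp h])
  set S : ℝ → ℝ := fun l => ∑ i, exp (l * s i) with hSdef
  set T : ℝ → ℝ := fun l => ∑ i, s i * exp (l * s i) with hTdef
  set Q : ℝ → ℝ := fun l => ∑ i, s i * (s i * exp (l * s i)) with hQdef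
  have hS : ∀ l, 0 < S l := fun l =>
    Finset.sum_pos (fun i _ => exp_pos _) Finset.univ_nonempty
  set g : ℝ → ℝ := fun l => log (S l) - l * T l / S l with hgdef
  -- the entropy equals g
  have hFg : (fun l : ℝ =>
      -∑ i, (exp (l * t i) / ∑ j, exp (l * t j)) *
        log (exp (l * t i) / ∑ j, exp (l * t j))) = g := by
    funext l
    have hZ : (∑ j, exp (l * t j)) = exp (l * M) * S l := by
      rw [hSdef, Finset.mul_sum]
      refine Finset.sum_congr rfl fun j _ => ?_
      rw [← Real.exp_add]; congr 1; simp only [hs]; ring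
    have hp : ∀ i, exp (l * t i) / (∑ j, exp (l * t j)) = exp (l * s i) / S l := by
      intro i
      rw [hZ, show exp (l * t i) = exp (l * M) * exp (l * s i) by
        rw [← Real.exp_add]; congr 1; simp only [hs]; ring,
        mul_div_mul_left _ _ (Real.exp_ne_zero _)]
    simp only [hp]
    have hterm : ∀ i, (exp (l * s i) / S l) * log (exp (l * s i) / S l)
        = (l * (s i * exp (l * s i)) - log (S l) * exp (l * s i)) / S l := by
      intro i
      rw [Real.log_div (Real.exp_ne_zero _) (hS l).ne', Real.log_exp]
      ring
    simp only [hterm]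
    rw [← Finset.sum_div, Finset.sum_sub_distrib, ← Finset.mul_sum, ← Finset.mul_sum]
    rw [hgdef]
    have hSne := (hS l).ne'
    field_simp
    show -(l * T l - log (S l) * S l) = _
    ring
  -- derivatives
  have hderivS : ∀ l, HasDerivAt S (T l) l := by
    intro l
    apply HasDerivAt.fun_sum
    intro i _
    have h1 : HasDerivAt (fun l : ℝ => l * s i) (s i) l := by
      simpa using (hasDerivAt_id l).mul_const (s i)
    simpa [mul_comm] using h1.exp
  have hderivT : ∀ l, HasDerivAt T (Q l) l := by
    intro l
    apply HasDerivAt.fun_sum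
    intro i _
    have h1 : HasDerivAt (fun l : ℝ => l * s i) (s i) l := by
      simpa using (hasDerivAt_id l).mul_const (s i)
    simpa [mul_comm] using h1.exp.const_mul (s i)
  -- strict Cauchy-Schwarz
  have hCS : ∀ l, T l ^ 2 < Q l * S l := by
    intro l
    have hex : ∃ i, S l * s i - T l ≠ 0 := by
      by_cases h : S l * s i0 - T l = 0
      · refine ⟨j0, fun h2 => hsij ?_⟩
        have hS' := (hS l).ne'
        have heq : S l * s i0 = S l * s j0 := by linarith
        exact mul_left_cancel₀ hS' heq
      · exact ⟨i0, h⟩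
    obtain ⟨i1, hi1⟩ := hex
    have hpos : 0 < ∑ i, exp (l * s i) * (S l * s i - T l) ^ 2 := by
      refine Finset.sum_pos' (fun i _ => by positivity) ⟨i1, Finset.mem_univ _, ?_⟩
      have h2 : (0 : ℝ) < (S l * s i1 - T l) ^ 2 :=
        lt_of_le_of_ne (sq_nonneg _) (Ne.symm (pow_ne_zero 2 hi1))
      exact mul_pos (exp_pos _) h2
    have hexpand : ∑ i, exp (l * s i) * (S l * s i - T l) ^ 2
        = S l ^ 2 * Q l - 2 * S l * T l * T l + T l ^ 2 * S l := by
      have h1 : ∀ i, exp (l * s i) * (S l * s i - T l) ^ 2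
          = S l ^ 2 * (s i * (s i * exp (l * s i)))
            - 2 * S l * T l * (s i * exp (l * s i)) + T l ^ 2 * exp (l * s i) := by
        intro i; ring
      simp only [h1]
      rw [Finset.sum_add_distrib, Finset.sum_sub_distrib, ← Finset.mul_sum,
        ← Finset.mul_sum, ← Finset.mul_sum]
    rw [hexpand] at hpos
    nlinarith [hS l]
  have hderivg : ∀ l, HasDerivAt g (-(l * (Q l * S l - T l ^ 2) / S l ^ 2)) l := by
    intro l
    have h1 : HasDerivAt (fun l => log (S l)) (T l / S l) l :=
      (hderivS l).log (hS l).ne'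
    have h2 : HasDerivAt (fun l : ℝ => l * T l) (T l + l * Q l) l := by
      simpa using (hasDerivAt_id l).fun_mul (hderivT l)
    have h3 : HasDerivAt (fun l : ℝ => l * T l / S l)
        (((T l + l * Q l) * S l - l * T l * T l) / S l ^ 2) l :=
      h2.div (hderivS l) (hS l).ne'
    have h4 := h1.fun_sub h3
    refine h4.congr_deriv ?_
    have := (hS l).ne'
    field_simp
    ring
  constructor
  · rw [hFg]
    apply strictAntiOn_of_deriv_neg (convex_Ioi 0)
    · have hdiff : Differentiable ℝ g := fun l => (hderivg l).differentiableAt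
      exact hdiff.continuous.continuousOn
    · intro x hx
      rw [interior_Ioi] at hx
      rw [(hderivg x).deriv]
      have h1 : 0 < x * (Q x * S x - T x ^ 2) / S x ^ 2 :=
        div_pos (mul_pos hx (sub_pos.mpr (hCS x))) (pow_pos (hS x) 2)
      linarith
  · rw [hFg]
    have hk0 : 0 < k := by
      rw [hk]
      apply Finset.card_pos.mpr
      obtain ⟨iM, hiM⟩ := hM.1
      exact ⟨iM, Finset.mem_filter.mpr ⟨Finset.mem_univ _, hiM⟩⟩
    have hkne : (k : ℝ) ≠ 0 := Nat.cast_pos.mpr hk0 |>.ne'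
    have hSlim : Filter.Tendsto S Filter.atTop (nhds k) := by
      have h1 : Filter.Tendsto S Filter.atTop
          (nhds (∑ i : Fin n, if t i = M then (1 : ℝ) else 0)) := by
        apply tendsto_finset_sum
        intro i _
        by_cases h : t i = M
        · have : s i = 0 := by simp [hs, h]
          simp only [this, mul_zero, Real.exp_zero, h, if_true]
          exact tendsto_const_nhds
        · have hle : t i ≤ M := hM.2 ⟨i, rfl⟩
          have hneg : s i < 0 := by simp only [hs]; cases lt_or_eq_of_le hle with
            | inl h' => linarith
            | inr h' => exact absurd h' h
          simp only [h, if_false]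
          exact Real.tendsto_exp_atBot.comp
            (Filter.Tendsto.atTop_mul_const_of_neg' hneg Filter.tendsto_id)
      have h2 : (∑ i : Fin n, if t i = M then (1 : ℝ) else 0) = k := by
        rw [hk, Finset.sum_boole]
      rwa [h2] at h1
    have hTlim : Filter.Tendsto (fun l => l * T l) Filter.atTop (nhds 0) := by
      have heq : (fun l : ℝ => l * T l)
          = fun l => ∑ i, (l * s i) * exp (l * s i) := by
        funext l
        rw [hTdef, Finset.mul_sum]
        exact Finset.sum_congr rfl fun i _ => by ring
      rw [heq]
      have h0 : (0 : ℝ) = ∑ _i : Fin n, (0 : ℝ) := by simp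
      rw [h0]
      apply tendsto_finset_sum
      intro i _
      by_cases h : t i = M
      · have : s i = 0 := by simp [hs, h]
        simp only [this, mul_zero, Real.exp_zero, zero_mul]
        exact tendsto_const_nhds
      · have hle : t i ≤ M := hM.2 ⟨i, rfl⟩
        have hneg : s i < 0 := by simp only [hs]; cases lt_or_eq_of_le hle with
          | inl h' => linarith
          | inr h' => exact absurd h' h
        exact aux_mul_exp_atBot.comp
          (Filter.Tendsto.atTop_mul_const_of_neg' hneg Filter.tendsto_id)
    have hdiv : Filter.Tendsto (fun l => l * T l / S l) Filter.atTop (nhds 0) := by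
      have := hTlim.div hSlim hkne
      simpa [Pi.div_def] using this
    have hlog : Filter.Tendsto (fun l => log (S l)) Filter.atTop (nhds (log k)) :=
      hSlim.log hkne
    have := hlog.sub hdiv
    simpa using this
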